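/- Let n ≥ 6 be even with 4 ∤ n and let D_{2n} be the dihedral group of order 2n. Set Y = {(d+1)/2 : d | n, d odd} ∪ {(d+2)/2 : d | n, d even}. Then D_{2n} is B-decomposable, where B = Y ∪ {(n+6)/4}. -/

import Mathlib

/-- `ncc A` is the number of conjugacy classes of `G` contained in the subgroup `A`. -/
noncomputable def ncc {G : Type*} [Group G] (A : Subgroup G) : ℕ :=
  Nat.card {c : ConjClasses G // c.carrier ⊆ (A : Set G)}

/-- `KG G` is the set of values `ncc A` for `A` a proper normal subgroup of `G`. -/
def KG (G : Type*) [Group G] : Set ℕ :=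
  {n | ∃ A : Subgroup G, A.Normal ∧ A ≠ ⊤ ∧ ncc A = n}

/-- `G` is `X`-decomposable if `KG G = X`. -/
def XDecomposable (G : Type*) [Group G] (X : Set ℕ) : Prop := KG G = X

section Aux
open DihedralGroup
variable {n : ℕ}

theorem inv_r (i : ZMod n) : (r i)⁻¹ = r (-i) := rfl
theorem inv_sr (i : ZMod n) : (sr i)⁻¹ = sr i := rfl

theorem isConj_r_iff (i : ZMod n) (x : DihedralGroup n) :
    IsConj (r i) x ↔ x = r i ∨ x = r (-i) := by
  rw [isConj_iff]
  constructor
  · rintro ⟨g, hg⟩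
    rcases g with j | j <;> rcases x with k | k <;>
      simp only [_root_.inv_r, _root_.inv_sr, r_mul_r, r_mul_sr, sr_mul_r, sr_mul_sr, r.injEq, sr.injEq,
        reduceCtorEq] at hg
    · left; rw [show k = i by linear_combination -hg]
    · right; rw [show k = -i by linear_combination -hg]
  · rintro (rfl | rfl)
    · exact ⟨1, by group⟩
    · exact ⟨sr 0, by simp [_root_.inv_sr]⟩

theorem isConj_sr_iff (i : ZMod n) (x : DihedralGroup n) :
    IsConj (sr i) x ↔ ∃ k, x = sr (i + 2 * k) := by
  rw [isConj_iff]
  constructor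
  · rintro ⟨g, hg⟩
    rcases g with j | j <;> rcases x with k | k <;>
      simp only [_root_.inv_r, _root_.inv_sr, r_mul_r, r_mul_sr, sr_mul_r, sr_mul_sr, r.injEq, sr.injEq,
        reduceCtorEq] at hg
    · exact ⟨-j, by rw [show k = i + 2 * -j by linear_combination -hg]⟩
    · exact ⟨j - i, by rw [show k = i + 2 * (j - i) by linear_combination -hg]⟩
  · rintro ⟨k, rfl⟩
    refine ⟨r (-k), ?_⟩
    simp only [_root_.inv_r, r_mul_sr, sr_mul_r, neg_neg]
    ring_nf


/-- the setoid identifying `x` and `-x` -/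
def negSetoid (α : Type*) [AddGroup α] : Setoid α where
  r x y := x = y ∨ x = -y
  iseqv := by
    refine ⟨fun x => Or.inl rfl, ?_, ?_⟩
    · rintro x y (rfl | rfl)
      · exact Or.inl rfl
      · exact Or.inr (neg_neg y).symm
    · rintro x y z (rfl | rfl) (rfl | rfl)
      · exact Or.inl rfl
      · exact Or.inr rfl
      · exact Or.inr rfl
      · exact Or.inl (neg_neg z)

theorem negSetoid_rel {α : Type*} [AddGroup α] (x y : α) :
    (negSetoid α).r x y ↔ (x = y ∨ x = -y) := Iff.rfl

/-- transfer along an AddEquiv -/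
def negSetoidCongr {α β : Type*} [AddGroup α] [AddGroup β] (e : α ≃+ β) :
    Quotient (negSetoid α) ≃ Quotient (negSetoid β) :=
  Quotient.congr e.toEquiv (by
    intro a b
    rw [negSetoid_rel, negSetoid_rel]
    constructor
    · rintro (rfl | rfl)
      · exact Or.inl rfl
      · exact Or.inr (map_neg e b)
    · rintro (h | h)
      · exact Or.inl (e.injective h)
      · exact Or.inr (e.injective (h.trans (map_neg e b).symm)))

theorem card_negQuot_zmod (d : ℕ) (hd : d ≠ 0) :
    Nat.card (Quotient (negSetoid (ZMod d))) = d / 2 + 1 := by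
  haveI : NeZero d := ⟨hd⟩
  have hb : Function.Bijective
      (fun k : Fin (d / 2 + 1) => (⟦((k.1 : ℕ) : ZMod d)⟧ : Quotient (negSetoid (ZMod d)))) := by
    constructor
    · intro k l h
      have hk : k.1 ≤ d / 2 := by omega
      have hl : l.1 ≤ d / 2 := by omega
      have h' := Quotient.exact h
      rcases h' with h' | h'
      · have := congrArg ZMod.val h'
        rw [ZMod.val_cast_of_lt (by omega), ZMod.val_cast_of_lt (by omega)] at this
        exact Fin.ext this
      · have h0 : ((k.1 + l.1 : ℕ) : ZMod d) = 0 := by push_cast; linear_combination h'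
        have hdvd : d ∣ k.1 + l.1 := (ZMod.natCast_eq_zero_iff _ _).mp h0
        have : k.1 + l.1 = 0 ∨ k.1 + l.1 = d := by
          rcases Nat.eq_zero_or_pos (k.1 + l.1) with h | h
          · exact Or.inl h
          · exact Or.inr (le_antisymm (by omega) (Nat.le_of_dvd h hdvd))
        exact Fin.ext (by omega)
    · intro c
      obtain ⟨x, rfl⟩ := Quotient.exists_rep c
      have hv : x.val < d := x.val_lt
      by_cases hle : x.val ≤ d / 2
      · refine ⟨⟨x.val, by omega⟩, Quotient.sound ?_⟩
        exact Or.inl (by simp [ZMod.natCast_val, ZMod.cast_id])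
      · refine ⟨⟨d - x.val, by omega⟩, Quotient.sound ?_⟩
        right
        have : ((d - x.val : ℕ) : ZMod d) = (d : ZMod d) - (x.val : ZMod d) :=
          Nat.cast_sub hv.le
        rw [this]
        simp [ZMod.natCast_val, ZMod.cast_id]
  have := Nat.card_eq_of_bijective _ hb
  rw [← this, Nat.card_eq_fintype_card, Fintype.card_fin]

/-- the subgroup of rotations `r i` with `i ∈ H` -/
def rotSub (H : AddSubgroup (ZMod n)) : Subgroup (DihedralGroup n) where
  carrier := r '' H
  one_mem' := ⟨0, H.zero_mem, rfl⟩
  mul_mem' := by rintro _ _ ⟨i, hi, rfl⟩ ⟨j, hj, rfl⟩; exact ⟨i + j, H.add_mem hi hj, rfl⟩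
  inv_mem' := by rintro _ ⟨i, hi, rfl⟩; exact ⟨-i, H.neg_mem hi, rfl⟩

theorem r_mem_rotSub {H : AddSubgroup (ZMod n)} {i : ZMod n} : r i ∈ rotSub H ↔ i ∈ H := by
  constructor
  · rintro ⟨j, hj, hji⟩
    obtain rfl : j = i := by injection hji
    exact hj
  · exact fun h => ⟨i, h, rfl⟩

theorem sr_not_mem_rotSub {H : AddSubgroup (ZMod n)} (m : ZMod n) : sr m ∉ rotSub H := by
  rintro ⟨j, hj, h⟩; exact absurd h (by simp)

instance rotSub_normal (H : AddSubgroup (ZMod n)) : (rotSub H).Normal := by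
  constructor
  rintro _ ⟨i, hi, rfl⟩ g
  have : IsConj (r i) (g * r i * g⁻¹) := isConj_iff.mpr ⟨g, rfl⟩
  rcases (isConj_r_iff i _).mp this with h | h <;> rw [h]
  · exact ⟨i, hi, rfl⟩
  · exact ⟨-i, H.neg_mem hi, rfl⟩

theorem rotSub_ne_top (H : AddSubgroup (ZMod n)) : rotSub H ≠ ⊤ := fun h =>
  sr_not_mem_rotSub (H := H) 0 (h ▸ Subgroup.mem_top _)


theorem carrier_mk_r_subset {H : AddSubgroup (ZMod n)} {i : ZMod n} (hi : i ∈ H) :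
    (ConjClasses.mk (r i)).carrier ⊆ (rotSub H : Set (DihedralGroup n)) := by
  intro y hy
  rw [ConjClasses.mem_carrier_iff_mk_eq, ConjClasses.mk_eq_mk_iff_isConj] at hy
  rcases (isConj_r_iff i y).mp hy.symm with rfl | rfl
  · exact ⟨i, hi, rfl⟩
  · exact ⟨-i, H.neg_mem hi, rfl⟩

theorem card_negQuot_sub [NeZero n] (H : AddSubgroup (ZMod n)) :
    Nat.card (Quotient (negSetoid ↥H)) = Nat.card ↥H / 2 + 1 := by
  have hherd : Nat.card ↥H ≠ 0 := Nat.card_pos.ne'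
  rw [Nat.card_congr (negSetoidCongr (zmodAddCyclicAddEquiv
      (inferInstance : IsAddCyclic ↥H))).symm, card_negQuot_zmod _ hherd]

theorem ncc_rotSub [NeZero n] (H : AddSubgroup (ZMod n)) :
    ncc (rotSub H) = Nat.card H / 2 + 1 := by
  classical
  let f : Quotient (negSetoid ↥H) →
      {c : ConjClasses (DihedralGroup n) // c.carrier ⊆ (rotSub H : Set (DihedralGroup n))} :=
    Quotient.lift (fun i : ↥H => ⟨ConjClasses.mk (r i.1), carrier_mk_r_subset i.2⟩) (by
      rintro ⟨a, ha⟩ ⟨b, hb⟩ (h | h)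
      · obtain rfl : a = b := congrArg Subtype.val h
        rfl
      · have hab : a = -b := by simpa using congrArg Subtype.val h
        subst hab
        exact Subtype.ext (ConjClasses.mk_eq_mk_iff_isConj.mpr
          (((isConj_r_iff b (r (-b))).mpr (Or.inr rfl)).symm)))
  have hf : Function.Bijective f := by
    constructor
    · rintro ⟨a⟩ ⟨b⟩ h
      have h' : ConjClasses.mk (r a.1) = ConjClasses.mk (r b.1) := congrArg Subtype.val h
      rw [ConjClasses.mk_eq_mk_iff_isConj] at h'
      apply Quotient.sound
      rcases (isConj_r_iff a.1 (r b.1)).mp h' with hh | hh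
      · exact Or.inl (Subtype.ext (by injection hh with h2; exact h2.symm))
      · refine Or.inr (Subtype.ext ?_)
        have : b.1 = -a.1 := by injection hh
        simp [this]
    · rintro ⟨c, hc⟩
      obtain ⟨g, rfl⟩ := ConjClasses.mk_surjective c
      have hg : g ∈ rotSub H := hc (ConjClasses.mem_carrier_iff_mk_eq.mpr rfl)
      rcases g with i | m
      · exact ⟨Quotient.mk _ ⟨i, r_mem_rotSub.mp hg⟩, rfl⟩
      · exact absurd hg (sr_not_mem_rotSub m)
  rw [ncc, ← Nat.card_eq_of_bijective f hf, card_negQuot_sub]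

theorem mem_zmultiples_two_iff [NeZero n] (x : ZMod n) :
    x ∈ AddSubgroup.zmultiples (2 : ZMod n) ↔ ∃ w : ZMod n, x = 2 * w := by
  rw [AddSubgroup.mem_zmultiples_iff]
  constructor
  · rintro ⟨k, rfl⟩
    exact ⟨(k : ZMod n), by rw [zsmul_eq_mul]; push_cast; ring⟩
  · rintro ⟨w, rfl⟩
    refine ⟨(w.val : ℤ), ?_⟩
    rw [zsmul_eq_mul]
    push_cast
    rw [ZMod.natCast_val, ZMod.cast_id]
    ring

theorem two_mul_mem_zmultiples_two [NeZero n] (k : ZMod n) :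
    2 * k ∈ AddSubgroup.zmultiples (2 : ZMod n) :=
  (mem_zmultiples_two_iff _).mpr ⟨k, rfl⟩

theorem mem_zmultiples_two_iff_even_val [NeZero n] (hn2 : 2 ∣ n) (x : ZMod n) :
    x ∈ AddSubgroup.zmultiples (2 : ZMod n) ↔ Even x.val := by
  rw [mem_zmultiples_two_iff]
  constructor
  · rintro ⟨w, rfl⟩
    have h1 : (2 * w) = w + w := by ring
    rw [h1, Nat.even_iff]
    have e1 := ZMod.val_add w w
    have e2 := Nat.mod_add_div (w.val + w.val) n
    have e3 : (n * ((w.val + w.val) / n)) % 2 = 0 :=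
      Nat.even_iff.mp ((even_iff_two_dvd.mpr hn2).mul_right _)
    omega
  · intro hx
    obtain ⟨c, hc⟩ := hx
    refine ⟨((c : ℕ) : ZMod n), ?_⟩
    have : x = ((x.val : ℕ) : ZMod n) := by rw [ZMod.natCast_val, ZMod.cast_id]
    rw [this, hc]
    push_cast
    ring

/-- the index-two subgroup containing the reflection `sr j` -/
def A2 (j : ZMod n) : Subgroup (DihedralGroup n) where
  carrier := r '' (AddSubgroup.zmultiples (2 : ZMod n)) ∪
    sr '' {m | m - j ∈ AddSubgroup.zmultiples (2 : ZMod n)}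
  one_mem' := Or.inl ⟨0, AddSubgroup.zero_mem _, rfl⟩
  mul_mem' := by
    rintro _ _ (⟨a, ha, rfl⟩ | ⟨a, ha, rfl⟩) (⟨b, hb, rfl⟩ | ⟨b, hb, rfl⟩)
    · exact Or.inl ⟨a + b, AddSubgroup.add_mem _ ha hb, rfl⟩
    · have hb' : b - j ∈ AddSubgroup.zmultiples (2 : ZMod n) := hb
      refine Or.inr ⟨b - a, ?_, rfl⟩
      show b - a - j ∈ AddSubgroup.zmultiples (2 : ZMod n)
      have : b - a - j = (b - j) - a := by ring
      rw [this]
      exact AddSubgroup.sub_mem _ hb' ha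
    · have ha' : a - j ∈ AddSubgroup.zmultiples (2 : ZMod n) := ha
      refine Or.inr ⟨a + b, ?_, rfl⟩
      show a + b - j ∈ AddSubgroup.zmultiples (2 : ZMod n)
      have : a + b - j = (a - j) + b := by ring
      rw [this]
      exact AddSubgroup.add_mem _ ha' hb
    · have ha' : a - j ∈ AddSubgroup.zmultiples (2 : ZMod n) := ha
      have hb' : b - j ∈ AddSubgroup.zmultiples (2 : ZMod n) := hb
      refine Or.inl ⟨b - a, ?_, rfl⟩
      show b - a ∈ AddSubgroup.zmultiples (2 : ZMod n)
      have : b - a = (b - j) - (a - j) := by ring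
      rw [this]
      exact AddSubgroup.sub_mem _ hb' ha'
  inv_mem' := by
    rintro _ (⟨a, ha, rfl⟩ | ⟨a, ha, rfl⟩)
    · exact Or.inl ⟨-a, AddSubgroup.neg_mem _ ha, rfl⟩
    · exact Or.inr ⟨a, ha, rfl⟩

theorem r_mem_A2 {j i : ZMod n} : r i ∈ A2 j ↔ i ∈ AddSubgroup.zmultiples (2 : ZMod n) := by
  constructor
  · rintro (⟨a, ha, hh⟩ | ⟨a, ha, hh⟩)
    · obtain rfl : a = i := by injection hh
      exact ha
    · exact absurd hh (by simp)
  · exact fun h => Or.inl ⟨i, h, rfl⟩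

theorem sr_mem_A2 {j m : ZMod n} : sr m ∈ A2 j ↔ m - j ∈ AddSubgroup.zmultiples (2 : ZMod n) := by
  constructor
  · rintro (⟨a, ha, hh⟩ | ⟨a, ha, hh⟩)
    · exact absurd hh (by simp)
    · obtain rfl : a = m := by injection hh
      exact ha
  · exact fun h => Or.inr ⟨m, h, rfl⟩

instance A2_normal [NeZero n] (j : ZMod n) : (A2 j).Normal := by
  constructor
  intro x hx g
  have hconj : IsConj x (g * x * g⁻¹) := isConj_iff.mpr ⟨g, rfl⟩
  rcases x with i | m
  · rcases (isConj_r_iff i _).mp hconj with h | h <;> rw [h, r_mem_A2]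
    · exact r_mem_A2.mp hx
    · exact AddSubgroup.neg_mem _ (r_mem_A2.mp hx)
  · obtain ⟨k, h⟩ := (isConj_sr_iff m _).mp hconj
    rw [h, sr_mem_A2]
    have : m + 2 * k - j = (m - j) + 2 * k := by ring
    rw [this]
    exact AddSubgroup.add_mem _ (sr_mem_A2.mp hx) (two_mul_mem_zmultiples_two k)

theorem A2_ne_top [NeZero n] (hn2 : 2 ∣ n) (hn1 : 1 < n) (j : ZMod n) : A2 j ≠ ⊤ := by
  intro h
  have h1 : r 1 ∈ A2 j := h ▸ Subgroup.mem_top _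
  rw [r_mem_A2, mem_zmultiples_two_iff_even_val hn2] at h1
  have : (1 : ZMod n).val = 1 := ZMod.val_one_eq_one_mod n ▸ Nat.mod_eq_of_lt hn1
  rw [this] at h1
  exact (Nat.not_even_iff_odd.mpr odd_one) h1

theorem carrier_mk_r_subset_A2 [NeZero n] {j i : ZMod n}
    (hi : i ∈ AddSubgroup.zmultiples (2 : ZMod n)) :
    (ConjClasses.mk (r i)).carrier ⊆ (A2 j : Set (DihedralGroup n)) := by
  intro y hy
  rw [ConjClasses.mem_carrier_iff_mk_eq, ConjClasses.mk_eq_mk_iff_isConj] at hy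
  rcases (isConj_r_iff i y).mp hy.symm with rfl | rfl <;> rw [SetLike.mem_coe, r_mem_A2]
  · exact hi
  · exact AddSubgroup.neg_mem _ hi

theorem carrier_mk_sr_subset_A2 [NeZero n] {j : ZMod n} :
    (ConjClasses.mk (sr j)).carrier ⊆ (A2 j : Set (DihedralGroup n)) := by
  intro y hy
  rw [ConjClasses.mem_carrier_iff_mk_eq, ConjClasses.mk_eq_mk_iff_isConj] at hy
  obtain ⟨k, rfl⟩ := (isConj_sr_iff j y).mp hy.symm
  rw [SetLike.mem_coe, sr_mem_A2]
  have : j + 2 * k - j = 2 * k := by ring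
  rw [this]
  exact two_mul_mem_zmultiples_two k

theorem ncc_A2 [NeZero n] (j : ZMod n) :
    ncc (A2 j) = Nat.card (AddSubgroup.zmultiples (2 : ZMod n)) / 2 + 2 := by
  classical
  set H := AddSubgroup.zmultiples (2 : ZMod n) with hH
  let f : Option (Quotient (negSetoid ↥H)) →
      {c : ConjClasses (DihedralGroup n) // c.carrier ⊆ (A2 j : Set (DihedralGroup n))} :=
    fun x => x.elim ⟨ConjClasses.mk (sr j), carrier_mk_sr_subset_A2⟩
      (Quotient.lift (fun i : ↥H => ⟨ConjClasses.mk (r i.1), carrier_mk_r_subset_A2 i.2⟩) (by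
        rintro ⟨a, ha⟩ ⟨b, hb⟩ (h | h)
        · obtain rfl : a = b := congrArg Subtype.val h
          rfl
        · have hab : a = -b := by simpa using congrArg Subtype.val h
          subst hab
          exact Subtype.ext (ConjClasses.mk_eq_mk_iff_isConj.mpr
            (((isConj_r_iff b (r (-b))).mpr (Or.inr rfl)).symm))))
  have hf : Function.Bijective f := by
    constructor
    · rintro (_ | a) (_ | b) h
      · rfl
      · exfalso
        obtain ⟨b, rfl⟩ := Quotient.exists_rep b
        have h' : ConjClasses.mk (sr j) = ConjClasses.mk (r b.1) := congrArg Subtype.val h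
        rw [ConjClasses.mk_eq_mk_iff_isConj] at h'
        obtain ⟨k, hk⟩ := (isConj_sr_iff j _).mp h'
        exact absurd hk (by simp)
      · exfalso
        obtain ⟨a, rfl⟩ := Quotient.exists_rep a
        have h' : ConjClasses.mk (r a.1) = ConjClasses.mk (sr j) := congrArg Subtype.val h
        rw [ConjClasses.mk_eq_mk_iff_isConj] at h'
        rcases (isConj_r_iff a.1 _).mp h' with hk | hk <;> exact absurd hk (by simp)
      · obtain ⟨a, rfl⟩ := Quotient.exists_rep a
        obtain ⟨b, rfl⟩ := Quotient.exists_rep b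
        have h' : ConjClasses.mk (r a.1) = ConjClasses.mk (r b.1) := congrArg Subtype.val h
        rw [ConjClasses.mk_eq_mk_iff_isConj] at h'
        congr 1
        apply Quotient.sound
        rcases (isConj_r_iff a.1 (r b.1)).mp h' with hh | hh
        · exact Or.inl (Subtype.ext (by injection hh with h2; exact h2.symm))
        · refine Or.inr (Subtype.ext ?_)
          have : b.1 = -a.1 := by injection hh
          simp [this]
    · rintro ⟨c, hc⟩
      obtain ⟨g, rfl⟩ := ConjClasses.mk_surjective c
      have hg : g ∈ A2 j := hc (ConjClasses.mem_carrier_iff_mk_eq.mpr rfl)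
      rcases g with i | m
      · exact ⟨some (Quotient.mk _ ⟨i, r_mem_A2.mp hg⟩), rfl⟩
      · refine ⟨none, Subtype.ext ?_⟩
        show ConjClasses.mk (sr j) = ConjClasses.mk (sr m)
        rw [ConjClasses.mk_eq_mk_iff_isConj]
        obtain ⟨w, hw⟩ := (mem_zmultiples_two_iff _).mp (sr_mem_A2.mp hg)
        exact (isConj_sr_iff j _).mpr ⟨w, by rw [show m = j + 2 * w by linear_combination hw]⟩
  rw [ncc, ← Nat.card_eq_of_bijective f hf, Finite.card_option, card_negQuot_sub]

/-- rotation part of a subgroup -/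
def rotPart (A : Subgroup (DihedralGroup n)) : AddSubgroup (ZMod n) where
  carrier := {i | r i ∈ A}
  zero_mem' := by show r 0 ∈ A; rw [← one_def]; exact A.one_mem
  add_mem' := by intro a b ha hb; show r (a + b) ∈ A; rw [← r_mul_r]; exact A.mul_mem ha hb
  neg_mem' := by intro a ha; show r (-a) ∈ A; rw [← _root_.inv_r]; exact A.inv_mem ha

theorem eq_rotSub (A : Subgroup (DihedralGroup n)) (hsr : ∀ m, sr m ∉ A) :
    A = rotSub (rotPart A) := by
  ext x
  rcases x with i | m
  · rw [r_mem_rotSub]; exact Iff.rfl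
  · simp only [iff_false_intro (hsr m), iff_false_intro (sr_not_mem_rotSub (H := rotPart A) m)]

theorem val_diff_parity [NeZero n] (hn2 : 2 ∣ n) {x y : ZMod n}
    (hx : x ∉ AddSubgroup.zmultiples (2 : ZMod n)) (hy : y ∉ AddSubgroup.zmultiples (2 : ZMod n)) :
    x - y ∈ AddSubgroup.zmultiples (2 : ZMod n) := by
  rw [mem_zmultiples_two_iff_even_val hn2, Nat.even_iff] at hx hy ⊢
  rcases eq_or_ne y 0 with rfl | hy0
  · simp [ZMod.val_zero] at hy
  · have h1 : (x - y).val = (x.val + (-y).val) % n := by rw [sub_eq_add_neg, ZMod.val_add]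
    have h2 : (-y).val = n - y.val := by rw [ZMod.neg_val, if_neg hy0]
    have h3 := Nat.mod_mod_of_dvd (x.val + (-y).val) hn2
    have h4 : y.val < n := y.val_lt
    have h5 : n % 2 = 0 := by omega
    omega

theorem eq_A2 [NeZero n] (hn2 : 2 ∣ n) {A : Subgroup (DihedralGroup n)} (hA : A.Normal)
    (hne : A ≠ ⊤) {j : ZMod n} (hj : sr j ∈ A) : A = A2 j := by
  set Hev := AddSubgroup.zmultiples (2 : ZMod n) with hHev
  have hconjmem : ∀ k : ZMod n, sr (j + 2 * k) ∈ A := by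
    intro k
    have hc : IsConj (sr j) (sr (j + 2 * k)) := (isConj_sr_iff j _).mpr ⟨k, rfl⟩
    obtain ⟨g, hg⟩ := isConj_iff.mp hc
    rw [← hg]
    exact hA.conj_mem _ hj g
  have hsrmem : ∀ m : ZMod n, m - j ∈ Hev → sr m ∈ A := by
    intro m hm
    obtain ⟨w, hw⟩ := (mem_zmultiples_two_iff _).mp hm
    have : m = j + 2 * w := by linear_combination hw
    rw [this]
    exact hconjmem w
  have hrot : ∀ x ∈ Hev, r x ∈ A := by
    intro x hx
    obtain ⟨w, rfl⟩ := (mem_zmultiples_two_iff _).mp hx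
    have h1 : sr (j + 2 * w) * sr j = r (-(2 * w)) := by rw [sr_mul_sr]; ring_nf
    have h2 : r (-(2 * w)) ∈ A := h1 ▸ A.mul_mem (hconjmem w) hj
    have h3 := A.inv_mem h2
    rwa [_root_.inv_r, neg_neg] at h3
  have htop : ∀ i : ZMod n, i ∉ Hev → r i ∈ A → A = ⊤ := by
    intro i hi hri
    rw [Subgroup.eq_top_iff']
    intro g
    rcases g with m | m
    · by_cases hm : m ∈ Hev
      · exact hrot m hm
      · have h1 : r i * r (m - i) = r m := by rw [r_mul_r]; ring_nf
        exact h1 ▸ A.mul_mem hri (hrot _ (val_diff_parity hn2 hm hi))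
    · by_cases hm : m - j ∈ Hev
      · exact hsrmem m hm
      · have h1 : sr (m - i) * r i = sr m := by rw [sr_mul_r]; ring_nf
        refine h1 ▸ A.mul_mem (hsrmem _ ?_) hri
        have : m - i - j = (m - j) - i := by ring
        rw [this]
        exact val_diff_parity hn2 hm hi
  ext x
  rcases x with i | m
  · rw [r_mem_A2]
    constructor
    · intro hri
      by_contra hi
      exact hne (htop i hi hri)
    · exact hrot i
  · rw [sr_mem_A2]
    constructor
    · intro hm
      by_contra hmj
      have h2 : r (j - m) ∈ A := by rw [← sr_mul_sr]; exact A.mul_mem hm hj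
      have h3 : j - m ∉ Hev := by
        intro hc
        have := Hev.neg_mem hc
        rw [neg_sub] at this
        exact hmj this
      exact hne (htop _ h3 h2)
    · exact hsrmem m

theorem card_Hev (hn0 : n ≠ 0) (hn2 : 2 ∣ n) :
    Nat.card (AddSubgroup.zmultiples (2 : ZMod n)) = n / 2 := by
  rw [Nat.card_zmultiples]
  have h2 : (2 : ZMod n) = ((2 : ℕ) : ZMod n) := by push_cast; rfl
  rw [h2, ZMod.addOrderOf_coe 2 hn0, Nat.gcd_comm, Nat.gcd_eq_left hn2]

theorem card_zmultiples_divisor (hn0 : n ≠ 0) {d : ℕ} (hd : d ∣ n) :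
    Nat.card (AddSubgroup.zmultiples ((↑(n / d) : ZMod n))) = d := by
  rw [Nat.card_zmultiples, ZMod.addOrderOf_coe _ hn0, Nat.gcd_comm,
    Nat.gcd_eq_left (Nat.div_dvd_of_dvd hd), Nat.div_div_self hd hn0]

end Aux

open DihedralGroup in
/-- For even `n ≥ 6` with `4 ∤ n`, the dihedral group `D_{2n}` is `B`-decomposable, where
`B = Y ∪ {(n+6)/4}` and `Y = {(d+1)/2 : d ∣ n, d odd} ∪ {(d+2)/2 : d ∣ n, d even}`. -/
theorem dihedral_four_not_dvd_decomposable (n : ℕ) (hn : 6 ≤ n) (heven : Even n)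
    (h4 : ¬ 4 ∣ n) :
    XDecomposable (DihedralGroup n)
      (({m : ℕ | ∃ d : ℕ, d ∣ n ∧ Odd d ∧ m = (d + 1) / 2} ∪
        {m : ℕ | ∃ d : ℕ, d ∣ n ∧ Even d ∧ m = (d + 2) / 2}) ∪ {(n + 6) / 4}) := by
  haveI : NeZero n := ⟨by omega⟩
  have hn0 : n ≠ 0 := by omega
  have hn2 : 2 ∣ n := heven.two_dvd
  have hn4 : n % 4 = 2 := by omega
  rw [XDecomposable]
  ext m
  simp only [KG, Set.mem_setOf_eq, Set.mem_union, Set.mem_singleton_iff]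
  constructor
  · rintro ⟨A, hnorm, hne, rfl⟩
    by_cases hsr : ∀ k : ZMod n, sr k ∉ A
    · left
      have hA := eq_rotSub A hsr
      set d := Nat.card (rotPart A) with hd
      have hdvd : d ∣ n := by
        have := AddSubgroup.card_addSubgroup_dvd_card (rotPart A)
        rwa [Nat.card_zmod] at this
      have hval : ncc A = d / 2 + 1 := by rw [hA, ncc_rotSub]
      rcases Nat.even_or_odd d with he | ho
      · right
        obtain ⟨c, hc⟩ := he
        exact ⟨d, hdvd, ⟨c, hc⟩, by omega⟩
      · left
        obtain ⟨c, hc⟩ := ho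
        exact ⟨d, hdvd, ⟨c, hc⟩, by omega⟩
    · right
      push_neg at hsr
      obtain ⟨j, hj⟩ := hsr
      rw [eq_A2 hn2 hnorm hne hj, ncc_A2, card_Hev hn0 hn2]
      omega
  · rintro ((⟨d, hd, hodd, rfl⟩ | ⟨d, hd, hev, rfl⟩) | rfl)
    · refine ⟨rotSub (AddSubgroup.zmultiples ((↑(n / d) : ZMod n))), rotSub_normal _,
        rotSub_ne_top _, ?_⟩
      rw [ncc_rotSub, card_zmultiples_divisor hn0 hd]
      obtain ⟨c, hc⟩ := hodd
      omega
    · refine ⟨rotSub (AddSubgroup.zmultiples ((↑(n / d) : ZMod n))), rotSub_normal _,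
        rotSub_ne_top _, ?_⟩
      rw [ncc_rotSub, card_zmultiples_divisor hn0 hd]
      obtain ⟨c, hc⟩ := hev
      omega
    · refine ⟨A2 0, A2_normal 0, A2_ne_top hn2 (by omega) 0, ?_⟩
      rw [ncc_A2, card_Hev hn0 hn2]
      omega
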